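/- For α ∈ (√2-1, 1/2) and α' ∈ (1/3, (3-√5)/2), the maps T_α and T_{α'} are not c-isomorphic for any c ∈ (0,∞]: there is no invertible bi-measurable map φ defined off null sets with φ ∘ T_α = T_{α'} ∘ φ and μ_α ∘ φ^{-1} = c·μ_{α'}. -/

import Mathlib

open Set MeasureTheory Filter Topology
open scoped Classical

noncomputable def gauss (x : ℝ) : ℝ := Int.fract (1 / x)

def Dset (α : ℝ) : Set ℝ := ⋃ n : ℕ, Set.Icc (1 / ((n : ℝ) + 1 + α)) (1 / ((n : ℝ) + 1))

noncomputable def T (α x : ℝ) : ℝ := if x ∈ Dset α then 1 - gauss x else gauss x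

noncomputable def fdens (α : ℝ) : ℝ → ℝ := fun x =>
  Set.indicator (Set.Icc α (α / (1 - α))) (fun y => 1 / y) x +
  Set.indicator (Set.Icc (α / (1 - α)) (1 - α)) (fun y => 1 / (1 + y)) x +
  Set.indicator (Set.Icc (1 - α) 1) (fun y => 2 / (1 - y ^ 2)) x

noncomputable def muMeas (α : ℝ) : Measure ℝ :=
  volume.withDensity fun x => ENNReal.ofReal (fdens α x)


lemma mem_Dset {α x : ℝ} (n : ℕ) (h1 : 1 / ((n:ℝ)+1+α) ≤ x) (h2 : x ≤ 1/((n:ℝ)+1)) :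
    x ∈ Dset α := Set.mem_iUnion.2 ⟨n, h1, h2⟩

lemma not_mem_Dset_mid {α x : ℝ} (h1 : 1/2 < x) (h2 : x < 1/(1+α)) : x ∉ Dset α := by
  intro hx
  rcases Set.mem_iUnion.1 hx with ⟨n, hn1, hn2⟩
  rcases Nat.eq_zero_or_pos n with rfl | hn
  · push_cast at hn1
    rw [zero_add] at hn1
    linarith
  · have h3 : (1:ℝ) ≤ (n:ℝ) := by exact_mod_cast hn
    have : 1/((n:ℝ)+1) ≤ 1/2 := by
      apply one_div_le_one_div_of_le <;> linarith
    linarith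

lemma not_mem_Dset_low {α x : ℝ} (hα : 1/3 < α) (hx0 : α ≤ x) (h2 : x < 1/(2+α)) :
    x ∉ Dset α := by
  intro hx
  rcases Set.mem_iUnion.1 hx with ⟨n, hn1, hn2⟩
  match n with
  | 0 =>
    push_cast at hn1
    rw [zero_add] at hn1
    have h4 : 1/(2+α) < 1/(1+α) := by
      apply one_div_lt_one_div_of_lt <;> linarith
    linarith
  | 1 =>
    push_cast at hn1
    norm_num at hn1
    rw [one_div] at h2
    linarith
  | (m+2) =>
    have h3 : (0:ℝ) ≤ (m:ℝ) := Nat.cast_nonneg m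
    have : 1/((m:ℝ)+2+1) ≤ 1/3 := by
      apply one_div_le_one_div_of_le <;> linarith
    push_cast at hn2
    linarith

lemma fract_eq {r : ℝ} {n : ℕ} (h1 : (n:ℝ) ≤ r) (h2 : r < n+1) : Int.fract r = r - n := by
  have h : ⌊r⌋ = (n:ℤ) := by
    rw [Int.floor_eq_iff]
    constructor <;> push_cast <;> linarith
  rw [Int.fract, h]
  push_cast; ring

lemma one_div_upper {a x : ℝ} (ha : 0 < a) (hx : 1/a ≤ x) : 1/x ≤ a := by
  have h0 : 0 < (1:ℝ)/a := by positivity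
  have := one_div_le_one_div_of_le h0 hx
  rwa [one_div_one_div] at this

lemma one_div_upper' {a x : ℝ} (ha : 0 < a) (hx : 1/a < x) : 1/x < a := by
  have h0 : 0 < (1:ℝ)/a := by positivity
  have := one_div_lt_one_div_of_lt h0 hx
  rwa [one_div_one_div] at this

lemma one_div_lower {a x : ℝ} (hx0 : 0 < x) (hx : x ≤ 1/a) : a ≤ 1/x := by
  rcases le_or_gt a 0 with h | h
  · exact h.trans (by positivity)
  · have := one_div_le_one_div_of_le hx0 hx
    rwa [one_div_one_div] at this

lemma one_div_lower' {a x : ℝ} (hx0 : 0 < x) (ha : 0 < a) (hx : x < 1/a) : a < 1/x := by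
  have := one_div_lt_one_div_of_lt hx0 hx
  rwa [one_div_one_div] at this

lemma Tval_f1 {α x : ℝ} (hα0 : 0 < α) (hα1 : α < 1) (hx : 1/(1+α) ≤ x) (hx1 : x ≤ 1) :
    T α x = 2 - 1/x := by
  have hx0 : 0 < x := lt_of_lt_of_le (by positivity) hx
  have hD : x ∈ Dset α := mem_Dset 0 (by push_cast; rw [zero_add]; exact hx)
    (by push_cast; rw [zero_add]; norm_num; exact hx1)
  have h1 : (1:ℝ) ≤ 1/x := one_div_lower hx0 (by norm_num; exact hx1)
  have h2 : 1/x ≤ 1+α := one_div_upper (by linarith) hx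
  have hf : gauss x = 1/x - 1 := by
    unfold gauss
    rw [fract_eq (n := 1) (by push_cast; exact h1) (by push_cast; linarith)]
    norm_num
  unfold T
  rw [if_pos hD, hf]; ring

lemma Tval_n1 {α x : ℝ} (hα0 : 0 < α) (hx : 1/2 < x) (hx1 : x < 1/(1+α)) :
    T α x = 1/x - 1 := by
  have hx0 : 0 < x := lt_trans (by norm_num) hx
  have h1 : 1+α < 1/x := one_div_lower' hx0 (by linarith) hx1
  have h2 : 1/x < 2 := one_div_upper' (by norm_num) hx
  have hf : gauss x = 1/x - 1 := by
    unfold gauss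
    rw [fract_eq (n := 1) (by push_cast; linarith) (by push_cast; linarith)]
    norm_num
  unfold T
  rw [if_neg (not_mem_Dset_mid hx hx1), hf]

lemma Tval_f2 {α x : ℝ} (hα0 : 0 < α) (hα1 : α < 1) (hx : 1/(2+α) ≤ x) (hx1 : x ≤ 1/2) :
    T α x = 3 - 1/x := by
  have hx0 : 0 < x := lt_of_lt_of_le (by positivity) hx
  have hD : x ∈ Dset α := mem_Dset 1
    (by push_cast; rw [show (1:ℝ)+1+α = 2+α by ring]; exact hx)
    (by push_cast; norm_num; exact hx1)
  have h1 : (2:ℝ) ≤ 1/x := one_div_lower hx0 hx1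
  have h2 : 1/x ≤ 2+α := one_div_upper (by linarith) hx
  have hf : gauss x = 1/x - 2 := by
    unfold gauss
    rw [fract_eq (n := 2) (by push_cast; exact h1) (by push_cast; linarith)]
    norm_num
  unfold T
  rw [if_pos hD, hf]; ring

lemma Tval_n2 {α x : ℝ} (hα3 : 1/3 < α) (hα1 : α < 1) (hx : α ≤ x) (hx1 : x < 1/(2+α)) :
    T α x = 1/x - 2 := by
  have hx0 : 0 < x := by linarith
  have h1 : 2+α < 1/x := one_div_lower' hx0 (by linarith) hx1
  have h2 : 1/x < 3 := by
    have : 1/x ≤ 1/α := one_div_le_one_div_of_le (by linarith) hx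
    have h3 : 1/α < 3 := one_div_upper' (by norm_num) (by linarith [hα3])
    linarith
  have hf : gauss x = 1/x - 2 := by
    unfold gauss
    rw [fract_eq (n := 2) (by push_cast; linarith) (by push_cast; linarith)]
    norm_num
  unfold T
  rw [if_neg (not_mem_Dset_low hα3 hx hx1), hf]

lemma alpha_facts {α : ℝ} (hα : α ∈ Set.Ioo (Real.sqrt 2 - 1) (1/2:ℝ)) :
    0 < α ∧ α < 1/2 ∧ 1 < α^2 + 2*α := by
  obtain ⟨h1, h2⟩ := hα
  have hs : Real.sqrt 2 ^ 2 = 2 := Real.sq_sqrt (by norm_num)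
  have hsn : 0 ≤ Real.sqrt 2 := Real.sqrt_nonneg 2
  refine ⟨by nlinarith, h2, by nlinarith⟩

lemma alpha'_facts {α' : ℝ} (hα' : α' ∈ Set.Ioo (1/3:ℝ) ((3 - Real.sqrt 5)/2)) :
    1/3 < α' ∧ α' < 1/2 ∧ 0 < α'^2 - 3*α' + 1 ∧ α'^2 + 2*α' < 1 := by
  obtain ⟨h1, h2⟩ := hα'
  have hs : Real.sqrt 5 ^ 2 = 5 := Real.sq_sqrt (by norm_num)
  have hsn : 0 ≤ Real.sqrt 5 := Real.sqrt_nonneg 5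
  have h5 : (2:ℝ) ≤ Real.sqrt 5 := by nlinarith
  refine ⟨h1, by nlinarith, by nlinarith, by nlinarith⟩

lemma unique_pre {α : ℝ} (hα : α ∈ Set.Ioo (Real.sqrt 2 - 1) (1/2:ℝ)) {y : ℝ}
    (hy : y ∈ Set.Ioo α (1-α)) :
    1/(1+y) ∈ Set.Icc α 1 ∧ T α (1/(1+y)) = y ∧
      ∀ x ∈ Set.Icc α 1, T α x = y → x = 1/(1+y) := by
  obtain ⟨hα0, hα2, hαk⟩ := alpha_facts hα
  obtain ⟨hy1, hy2⟩ := hy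
  have hy0 : 0 < y := lt_trans hα0 hy1
  have hp1 : 1/2 < 1/(1+y) := by
    apply one_div_lt_one_div_of_lt <;> linarith
  have hp2 : 1/(1+y) < 1/(1+α) := by
    apply one_div_lt_one_div_of_lt <;> linarith
  have hp3 : 1/(1+y) ≤ 1 := by
    rw [div_le_one (by linarith)]; linarith
  have hmem : 1/(1+y) ∈ Set.Icc α 1 := ⟨by linarith, hp3⟩
  have hT : T α (1/(1+y)) = y := by
    rw [Tval_n1 hα0 hp1 hp2, one_div_one_div]; ring
  refine ⟨hmem, hT, ?_⟩
  rintro x ⟨hx1, hx2⟩ hTx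
  rcases le_or_gt x (1/2) with h | h
  · -- flipped branch n=2 : T x = 3 - 1/x > 1-α > y, contradiction
    have hlow : 1/(2+α) ≤ x := by
      have : 1/(2+α) ≤ α := by
        rw [div_le_iff₀ (by linarith)]; nlinarith
      linarith
    rw [Tval_f2 hα0 (by linarith) hlow h] at hTx
    have hxa : 1/x ≤ 1/α := one_div_le_one_div_of_le hα0 hx1
    have : 1/α < 2 + α := by
      rw [div_lt_iff₀ hα0]; nlinarith
    linarith
  · rcases lt_or_ge x (1/(1+α)) with h2 | h2
    · rw [Tval_n1 hα0 h h2] at hTx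
      have : 1/x = 1 + y := by linarith
      rw [← this, one_div_one_div]
    · rw [Tval_f1 hα0 (by linarith) h2 hx2] at hTx
      have : 1/x ≤ 1 + α := one_div_upper (by linarith) h2
      linarith

lemma two_pre {α' : ℝ} (hα' : α' ∈ Set.Ioo (1/3:ℝ) ((3 - Real.sqrt 5)/2)) {z : ℝ}
    (hz : z ∈ Set.Icc α' 1) (hz' : z ≠ α') :
    ∃ x₁ x₂ : ℝ, x₁ ∈ Set.Icc α' 1 ∧ x₂ ∈ Set.Icc α' 1 ∧ x₁ ≠ x₂ ∧
      T α' x₁ = z ∧ T α' x₂ = z := by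
  obtain ⟨hα1, hα2, hαk, hαs⟩ := alpha'_facts hα'
  obtain ⟨hz1', hz2⟩ := hz
  have hz1 : α' < z := lt_of_le_of_ne hz1' (Ne.symm hz')
  have hz0 : 0 < z := by linarith
  rcases lt_or_ge z (1-α') with hcase | hcase
  · -- z ∈ (α', 1-α') : preimages 1/(1+z) and 1/(2+z)
    refine ⟨1/(1+z), 1/(2+z), ?_, ?_, ?_, ?_, ?_⟩
    · constructor
      · have : 1/2 < 1/(1+z) := by apply one_div_lt_one_div_of_lt <;> linarith
        linarith
      · rw [div_le_one (by linarith)]; linarith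
    · constructor
      · rw [le_div_iff₀ (by linarith)]; nlinarith
      · have : 1/(2+z) ≤ 1/2 := by apply one_div_le_one_div_of_le <;> linarith
        linarith
    · have ha : 1/(2+z) ≤ 1/2 := by apply one_div_le_one_div_of_le <;> linarith
      have hb : 1/2 < 1/(1+z) := by apply one_div_lt_one_div_of_lt <;> linarith
      exact fun h => by rw [← h] at ha; linarith
    · rw [Tval_n1 (by linarith) (by apply one_div_lt_one_div_of_lt <;> linarith)
        (by apply one_div_lt_one_div_of_lt <;> linarith), one_div_one_div]
      ring
    · rw [Tval_n2 hα1 (by linarith)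
        (by rw [le_div_iff₀ (by linarith)]; nlinarith)
        (by apply one_div_lt_one_div_of_lt <;> linarith), one_div_one_div]
      ring
  · -- z ∈ [1-α', 1] : preimages 1/(2-z) and 1/(3-z)
    refine ⟨1/(2-z), 1/(3-z), ?_, ?_, ?_, ?_, ?_⟩
    · constructor
      · have : 1/2 ≤ 1/(2-z) := by apply one_div_le_one_div_of_le <;> linarith
        linarith
      · rw [div_le_one (by linarith)]; linarith
    · constructor
      · have : 1/(2+α') ≤ 1/(3-z) := by apply one_div_le_one_div_of_le <;> linarith
        have h2 : α' ≤ 1/(2+α') := by rw [le_div_iff₀ (by linarith)]; nlinarith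
        linarith
      · have : 1/(3-z) ≤ 1/2 := by apply one_div_le_one_div_of_le <;> linarith
        linarith
    · have ha : 1/(3-z) ≤ 1/2 := by apply one_div_le_one_div_of_le <;> linarith
      have hb : 1/(1+α') ≤ 1/(2-z) := by apply one_div_le_one_div_of_le <;> linarith
      have hc : 1/2 < 1/(1+α') := by apply one_div_lt_one_div_of_lt <;> linarith
      exact fun h => by rw [← h] at ha; linarith
    · rw [Tval_f1 (by linarith) (by linarith)
        (by apply one_div_le_one_div_of_le <;> linarith)
        (by rw [div_le_one (by linarith)]; linarith), one_div_one_div]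
      ring
    · rw [Tval_f2 (by linarith) (by linarith)
        (by apply one_div_le_one_div_of_le <;> linarith)
        (by apply one_div_le_one_div_of_le <;> linarith), one_div_one_div]
      ring

lemma fdens_measurable (a : ℝ) : Measurable (fdens a) := by
  unfold fdens
  refine ((Measurable.indicator ?_ measurableSet_Icc).add
    (Measurable.indicator ?_ measurableSet_Icc)).add
    (Measurable.indicator ?_ measurableSet_Icc)
  · exact measurable_const.div measurable_id
  · exact measurable_const.div (measurable_const.add measurable_id)
  · exact measurable_const.div (measurable_const.sub (measurable_id.pow_const 2))

lemma fdens_nonneg_parts {a y : ℝ} (ha0 : 0 < a) (ha1 : a < 1) :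
    0 ≤ Set.indicator (Set.Icc a (a / (1 - a))) (fun y => 1 / y) y ∧
    0 ≤ Set.indicator (Set.Icc (a / (1 - a)) (1 - a)) (fun y => 1 / (1 + y)) y ∧
    0 ≤ Set.indicator (Set.Icc (1 - a) 1) (fun y => 2 / (1 - y ^ 2)) y := by
  have hr0 : 0 < a / (1 - a) := div_pos ha0 (by linarith)
  refine ⟨Set.indicator_nonneg (fun x hx => ?_) y,
    Set.indicator_nonneg (fun x hx => ?_) y,
    Set.indicator_nonneg (fun x hx => ?_) y⟩
  · have hx0 : 0 < x := lt_of_lt_of_le ha0 hx.1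
    exact one_div_nonneg.2 hx0.le
  · have h1 : 0 < a / (1 - a) := hr0
    have : (0:ℝ) < 1 + x := by have := hx.1; linarith
    exact one_div_nonneg.2 this.le
  · obtain ⟨h1, h2⟩ := hx
    have h3 : (0:ℝ) ≤ 1 - x^2 := by nlinarith
    exact div_nonneg (by norm_num) h3

lemma fdens_pos {a y : ℝ} (ha0 : 0 < a) (ha1 : a < 1) (hy1 : a ≤ y) (hy2 : y < 1) :
    0 < fdens a y := by
  have hy0 : 0 < y := lt_of_lt_of_le ha0 hy1
  obtain ⟨n1, n2, n3⟩ := fdens_nonneg_parts (a := a) (y := y) ha0 ha1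
  unfold fdens
  rcases le_or_gt y (a/(1-a)) with h | h
  · rw [Set.indicator_of_mem (Set.mem_Icc.mpr ⟨hy1, h⟩)]
    have : 0 < 1/y := by positivity
    linarith
  · rcases le_or_gt y (1-a) with h2 | h2
    · rw [Set.indicator_of_mem (Set.mem_Icc.mpr ⟨le_of_lt h, h2⟩)]
      have : 0 < 1/(1+y) := by positivity
      linarith
    · rw [Set.indicator_of_mem (Set.mem_Icc.mpr ⟨le_of_lt h2, le_of_lt hy2⟩)]
      have h3 : (0:ℝ) < 1 - y^2 := by nlinarith
      have : 0 < 2/(1-y^2) := by positivity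
      linarith

lemma mu_null {a : ℝ} {s : Set ℝ} (hs : volume s = 0) : muMeas a s = 0 :=
  (withDensity_absolutelyContinuous volume _) hs

lemma vol_null_cover {a : ℝ} (ha0 : 0 < a) (ha1 : a < 1) {s : Set ℝ}
    (hs : muMeas a s = 0) :
    ∃ t : Set ℝ, s ∩ Set.Ico a 1 ⊆ t ∧ volume t = 0 := by
  set u := toMeasurable (muMeas a) s with hu_def
  have hu : MeasurableSet u := measurableSet_toMeasurable _ _
  have huμ : muMeas a u = 0 := by rw [hu_def, measure_toMeasurable]; exact hs
  set t := u ∩ Set.Ico a 1 with ht_def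
  have htm : MeasurableSet t := hu.inter measurableSet_Ico
  have htμ : muMeas a t = 0 := measure_mono_null Set.inter_subset_left huμ
  have hint : ∫⁻ x in t, ENNReal.ofReal (fdens a x) ∂volume = 0 := by
    rw [muMeas, withDensity_apply _ htm] at htμ; exact htμ
  have hmeas : Measurable fun x => ENNReal.ofReal (fdens a x) :=
    (fdens_measurable a).ennreal_ofReal
  rw [lintegral_eq_zero_iff hmeas] at hint
  have h3 : volume.restrict t {x | ENNReal.ofReal (fdens a x) ≠ 0} = 0 := by
    have := ae_iff.1 hint
    simpa using this
  have h2 : t ⊆ {x | ENNReal.ofReal (fdens a x) ≠ 0} := by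
    intro x hx
    have hpos : 0 < fdens a x := fdens_pos ha0 ha1 hx.2.1 hx.2.2
    simp only [Set.mem_setOf_eq, ne_eq, ENNReal.ofReal_eq_zero, not_le]
    exact hpos
  have h4 : volume t = 0 := by
    have h5 : volume.restrict t t = 0 :=
      measure_mono_null h2 h3
    rwa [Measure.restrict_apply_self] at h5
  exact ⟨t, fun x hx => ⟨subset_toMeasurable _ _ hx.1, hx.2⟩, h4⟩

lemma image_null {f : ℝ → ℝ} {s : Set ℝ} {K : NNReal} (hf : LipschitzOnWith K f s)
    (hs : volume s = 0) : volume (f '' s) = 0 := by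
  have h := hf.hausdorffMeasure_image_le (d := 1) (by norm_num)
  rw [MeasureTheory.hausdorffMeasure_real] at h
  have : ((K : ENNReal) ^ (1:ℝ)) * volume s = 0 := by rw [hs, mul_zero]
  exact le_antisymm (le_trans h this.le) (zero_le)

lemma lip_inv {a : ℝ} (ha : 0 < a) (c e : ℝ) (he : |e| ≤ 1) :
    LipschitzOnWith (Real.toNNReal (1/a^2)) (fun x => c + e/x) (Set.Icc a 1) := by
  rw [lipschitzOnWith_iff_dist_le_mul]
  rintro x ⟨hx1, hx2⟩ y ⟨hy1, hy2⟩
  have hx0 : 0 < x := lt_of_lt_of_le ha hx1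
  have hy0 : 0 < y := lt_of_lt_of_le ha hy1
  rw [Real.dist_eq, Real.dist_eq, Real.coe_toNNReal _ (by positivity)]
  have heq : c + e/x - (c + e/y) = e * (y - x) / (x*y) := by field_simp; ring
  rw [heq, abs_div, abs_mul, abs_of_pos (mul_pos hx0 hy0)]
  have h1 : |e| * |y - x| ≤ |x - y| := by
    rw [abs_sub_comm y x]
    calc |e| * |x - y| ≤ 1 * |x - y| := by
          apply mul_le_mul_of_nonneg_right he (abs_nonneg _)
      _ = |x - y| := one_mul _
  have h2 : a^2 ≤ x * y := by nlinarith
  calc |e| * |y - x| / (x*y)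
      ≤ |x - y| / a^2 := by
        apply div_le_div₀ (abs_nonneg _) h1 (by positivity) h2
    _ = 1/a^2 * |x - y| := by ring

lemma Tmaps' {α' : ℝ} (hα' : α' ∈ Set.Ioo (1/3:ℝ) ((3 - Real.sqrt 5)/2)) {x : ℝ}
    (hx : x ∈ Set.Icc α' 1) :
    T α' x = 1/x - 2 ∨ T α' x = 3 - 1/x ∨ T α' x = 1/x - 1 ∨ T α' x = 2 - 1/x := by
  obtain ⟨hα1, hα2, hαk, hαs⟩ := alpha'_facts hα'
  obtain ⟨hx1, hx2⟩ := hx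
  rcases lt_or_ge x (1/(2+α')) with h1 | h1
  · exact Or.inl (Tval_n2 hα1 (by linarith) hx1 h1)
  · rcases le_or_gt x (1/2) with h2 | h2
    · exact Or.inr (Or.inl (Tval_f2 (by linarith) (by linarith) h1 h2))
    · rcases lt_or_ge x (1/(1+α')) with h3 | h3
      · exact Or.inr (Or.inr (Or.inl (Tval_n1 (by linarith) h2 h3)))
      · exact Or.inr (Or.inr (Or.inr (Tval_f1 (by linarith) (by linarith) h3 hx2)))

lemma mu_Ioo_pos {α : ℝ} (hα : α ∈ Set.Ioo (Real.sqrt 2 - 1) (1/2:ℝ)) :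
    muMeas α (Set.Ioo α (1-α)) ≠ 0 := by
  obtain ⟨hα0, hα2, hαk⟩ := alpha_facts hα
  have hquad : α^2 - 3*α + 1 < 0 := by
    have hs : Real.sqrt 2 ^ 2 = 2 := Real.sq_sqrt (by norm_num)
    have hsn : 0 ≤ Real.sqrt 2 := Real.sqrt_nonneg 2
    have h14 : (1.41:ℝ) < Real.sqrt 2 := by nlinarith
    have hα14 : (0.41:ℝ) < α := by have := hα.1; linarith
    nlinarith
  have hkey : 1 - α ≤ α/(1-α) := by
    rw [le_div_iff₀ (by linarith)]; nlinarith
  have hbound : ∀ y ∈ Set.Ioo α (1-α), (1:ENNReal) ≤ ENNReal.ofReal (fdens α y) := by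
    rintro y ⟨hy1, hy2⟩
    obtain ⟨n1, n2, n3⟩ := fdens_nonneg_parts (a := α) (y := y) hα0 (by linarith)
    have hy0 : 0 < y := lt_trans hα0 hy1
    have hind : Set.indicator (Set.Icc α (α/(1-α))) (fun y => 1/y) y = 1/y :=
      Set.indicator_of_mem (Set.mem_Icc.mpr ⟨hy1.le, by linarith⟩) _
    have h1y : (1:ℝ) ≤ 1/y := one_div_lower hy0 (by norm_num; linarith)
    rw [show (1:ENNReal) = ENNReal.ofReal 1 by simp]
    apply ENNReal.ofReal_le_ofReal
    unfold fdens
    rw [hind]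
    linarith
  have hcalc : volume (Set.Ioo α (1-α)) ≤ muMeas α (Set.Ioo α (1-α)) := by
    rw [muMeas, withDensity_apply _ measurableSet_Ioo]
    calc volume (Set.Ioo α (1-α)) = ∫⁻ _ in Set.Ioo α (1-α), 1 ∂volume := by
          rw [setLIntegral_one]
      _ ≤ ∫⁻ y in Set.Ioo α (1-α), ENNReal.ofReal (fdens α y) ∂volume := by
          apply setLIntegral_mono (fdens_measurable α).ennreal_ofReal hbound
  intro h0
  rw [h0] at hcalc
  have : volume (Set.Ioo α (1-α)) = 0 := le_antisymm hcalc (zero_le)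
  rw [Real.volume_Ioo] at this
  have h1 : (1:ℝ) - α - α ≤ 0 := by
    by_contra h
    push_neg at h
    rw [ENNReal.ofReal_eq_zero] at this
    linarith
  linarith

theorem stmt_19 (α α' : ℝ) (hα : α ∈ Set.Ioo (Real.sqrt 2 - 1) (1/2 : ℝ))
    (hα' : α' ∈ Set.Ioo (1/3 : ℝ) ((3 - Real.sqrt 5) / 2)) :
    ¬ ∃ (c : ENNReal) (N M : Set ℝ) (φ ψ : ℝ → ℝ),
      c ≠ 0 ∧
      muMeas α N = 0 ∧ muMeas α' M = 0 ∧
      Set.MapsTo (T α) (Set.Icc α 1 \ N) (Set.Icc α 1 \ N) ∧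
      Set.MapsTo (T α') (Set.Icc α' 1 \ M) (Set.Icc α' 1 \ M) ∧
      Measurable φ ∧ Measurable ψ ∧
      Set.BijOn φ (Set.Icc α 1 \ N) (Set.Icc α' 1 \ M) ∧
      Set.InvOn ψ φ (Set.Icc α 1 \ N) (Set.Icc α' 1 \ M) ∧
      (∀ x ∈ Set.Icc α 1 \ N, φ (T α x) = T α' (φ x)) ∧
      (∀ S : Set ℝ, MeasurableSet S → muMeas α (φ ⁻¹' S) = c * muMeas α' S) := by
  rintro ⟨c, N, M, φ, ψ, hc, hN, hM, hTA, hTB, hφm, hψm, hbij, hinv, hconj, hrel⟩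
  obtain ⟨hα0, hα2, hαk⟩ := alpha_facts hα
  obtain ⟨hα'1, hα'2, hα'k, hα's⟩ := alpha'_facts hα'
  obtain ⟨Nb, hNbsub, hNbvol⟩ := vol_null_cover hα0 (by linarith) hN
  obtain ⟨Mb, hMbsub, hMbvol⟩ :=
    vol_null_cover (show (0:ℝ) < α' by linarith) (by linarith) hM
  set bad : Set ℝ := (fun x => (-1) + 1/x) '' (Nb ∩ Set.Icc (1/2) 1) with hbad_def
  have hbadvol : volume bad = 0 :=
    image_null ((lip_inv (show (0:ℝ) < 1/2 by norm_num) (-1) 1 (by norm_num)).mono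
      Set.inter_subset_right) (measure_mono_null Set.inter_subset_left hNbvol)
  set K2 : Set ℝ := ((fun x => (-2) + 1/x) '' (Mb ∩ Set.Icc α' 1)) ∪
    ((fun x => 3 + (-1)/x) '' (Mb ∩ Set.Icc α' 1)) ∪
    ((fun x => (-1) + 1/x) '' (Mb ∩ Set.Icc α' 1)) ∪
    ((fun x => 2 + (-1)/x) '' (Mb ∩ Set.Icc α' 1)) ∪ {1} ∪ {α'} with hK2_def
  have hMbnull : volume (Mb ∩ Set.Icc α' 1) = 0 :=
    measure_mono_null Set.inter_subset_left hMbvol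
  have himg : ∀ c' e : ℝ, |e| ≤ 1 →
      volume ((fun x => c' + e/x) '' (Mb ∩ Set.Icc α' 1)) = 0 := fun c' e he =>
    image_null ((lip_inv (show (0:ℝ) < α' by linarith) c' e he).mono
      Set.inter_subset_right) hMbnull
  have hK2vol : volume K2 = 0 := by
    rw [hK2_def]
    refine measure_union_null (measure_union_null (measure_union_null
      (measure_union_null (measure_union_null ?_ ?_) ?_) ?_) ?_) ?_
    · exact himg (-2) 1 (by norm_num)
    · exact himg 3 (-1) (by norm_num)
    · exact himg (-1) 1 (by norm_num)
    · exact himg 2 (-1) (by norm_num)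
    · exact measure_singleton _
    · exact measure_singleton _
  set Kc := toMeasurable volume K2 with hKc_def
  have hμKc' : muMeas α' Kc = 0 :=
    mu_null (by rw [hKc_def, measure_toMeasurable]; exact hK2vol)
  have hincl : Set.Ioo α (1-α) \ (N ∪ bad) ⊆ φ ⁻¹' Kc := by
    rintro y ⟨⟨hy1, hy2⟩, hyNb⟩
    have hyN' : y ∉ N := fun h => hyNb (Or.inl h)
    have hybad : y ∉ bad := fun h => hyNb (Or.inr h)
    have hy0 : 0 < y := lt_trans hα0 hy1
    have hyA : y ∈ Set.Icc α 1 \ N := ⟨⟨hy1.le, by linarith⟩, hyN'⟩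
    obtain ⟨hxmem, hxT, hxuniq⟩ := unique_pre hα (Set.mem_Ioo.mpr ⟨hy1, hy2⟩)
    set x := 1/(1+y) with hx_def
    have hxN : x ∉ N := by
      intro hxN
      apply hybad
      have hxlt1 : x < 1 := by
        rw [hx_def, div_lt_one (by linarith)]; linarith
      have hxhalf : 1/2 < x := by
        rw [hx_def]; apply one_div_lt_one_div_of_lt <;> linarith
      refine ⟨x, ⟨hNbsub ⟨hxN, hxmem.1, hxlt1⟩, hxhalf.le, hxmem.2⟩, ?_⟩
      show (-1) + 1/(1/(1+y)) = y
      rw [one_div_one_div]; ring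
    have hxA : x ∈ Set.Icc α 1 \ N := ⟨hxmem, hxN⟩
    have huniqA : ∀ w ∈ Set.Icc α' 1 \ M, T α' w = φ y → w = φ x := by
      intro w hwB hwT
      obtain ⟨aw, hawA, hawφ⟩ := hbij.surjOn hwB
      have hψw : ψ w = aw := by rw [← hawφ, hinv.1 hawA]
      have hψwA : ψ w ∈ Set.Icc α 1 \ N := hψw ▸ hawA
      have hTψw : T α (ψ w) ∈ Set.Icc α 1 \ N := hTA hψwA
      have h1 : φ (T α (ψ w)) = φ y := by
        rw [hconj (ψ w) hψwA, hinv.2 hwB, hwT]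
      have h2 : T α (ψ w) = y := hbij.injOn hTψw hyA h1
      have h3 : ψ w = x := hxuniq (ψ w) hψwA.1 h2
      rw [← hinv.2 hwB, h3]
    have hφyB : φ y ∈ Set.Icc α' 1 \ M := hbij.mapsTo hyA
    show φ y ∈ Kc
    apply subset_toMeasurable volume K2
    by_cases hz : φ y = α'
    · rw [hK2_def]
      exact Or.inr (by simp [hz])
    · have main : ∀ w, w ∈ Set.Icc α' 1 → w ≠ φ x → T α' w = φ y → φ y ∈ K2 := by
        intro w hw hwne hwT
        have hwM : w ∈ M := by
          by_contra hwM
          exact hwne (huniqA w ⟨hw, hwM⟩ hwT)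
        by_cases hw1 : w = 1
        · have hT1 : T α' w = 1 := by
            subst hw1
            rw [Tval_f1 (show (0:ℝ) < α' by linarith) (by linarith)
              (by rw [div_le_one (by linarith)]; linarith) le_rfl]
            norm_num
          rw [hK2_def]
          exact Or.inl (Or.inr (by simp [← hwT, hT1]))
        · have hwMb : w ∈ Mb ∩ Set.Icc α' 1 :=
            ⟨hMbsub ⟨hwM, hw.1, lt_of_le_of_ne hw.2 hw1⟩, hw⟩
          rw [hK2_def]
          rcases Tmaps' hα' hw with h | h | h | h
          · exact Or.inl (Or.inl (Or.inl (Or.inl (Or.inl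
              ⟨w, hwMb, by rw [← hwT, h]; ring⟩))))
          · exact Or.inl (Or.inl (Or.inl (Or.inl (Or.inr
              ⟨w, hwMb, by rw [← hwT, h]; ring⟩))))
          · exact Or.inl (Or.inl (Or.inl (Or.inr
              ⟨w, hwMb, by rw [← hwT, h]; ring⟩)))
          · exact Or.inl (Or.inl (Or.inr
              ⟨w, hwMb, by rw [← hwT, h]; ring⟩))
      obtain ⟨x₁, x₂, hx₁, hx₂, hne, hT₁, hT₂⟩ := two_pre hα' hφyB.1 hz
      rcases eq_or_ne x₁ (φ x) with he | he
      · exact main x₂ hx₂ (fun h => hne (he.trans h.symm)) hT₂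
      · exact main x₁ hx₁ he hT₁
  have h0 : muMeas α (φ ⁻¹' Kc) = 0 := by
    rw [hrel Kc (measurableSet_toMeasurable _ _), hμKc', mul_zero]
  have h1 : muMeas α (Set.Ioo α (1-α) \ (N ∪ bad)) = 0 := measure_mono_null hincl h0
  have h2 : muMeas α (N ∪ bad) = 0 := measure_union_null hN (mu_null hbadvol)
  have h3 : muMeas α (Set.Ioo α (1-α)) = 0 := by
    rw [← measure_diff_null h2]
    exact h1
  exact mu_Ioo_pos hα h3
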